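/- In the setting of a loop-free episodic MDP with layers $\mathcal{S}_0,\dots,\mathcal{S}_L$, fixed policy $\pi$, transition kernels $P, \hat{P}$, and reward functions $r, \hat{r} : \mathcal{S}\times\mathcal{A} \to [0,1]$ with $|\hat{r}(s,a) - r(s,a)| \le c(s,a)$ and $\|\hat{P}(\cdot|s,a)-P(\cdot|s,a)\|_1 \le d(s,a)$ for all $(s,a)$, define the values $v = \sum_{l=0}^{L-1}\sum_{s\in\mathcal{S}_l} \mu(s) r(s,\pi(s))$ and $\hat{v} = \sum_{l=0}^{L-1}\sum_{s\in\mathcal{S}_l} \hat\mu(s) \hat{r}(s,\pi(s))$, where $\mu, \hat\mu$ are the respective occupation measures. Then $\hat{v} - v \le \sum_{l=0}^{L-1}\sum_{s\in\mathcal{S}_l} |\hat\mu(s)-\mu(s)| + \sum_{l=0}^{L-1}\sum_{s\in\mathcal{S}_l} \mu(s)(\hat{r}(s,\pi(s)) - r(s,\pi(s)))$, and consequently $\hat{v} - v \le L \sum_{k=0}^{L-1}\sum_{s\in\mathcal{S}_k} \mu(s) d(s,\pi(s)) + \sum_{l=0}^{L-1}\sum_{s\in\mathcal{S}_l} \mu(s)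 c(s,\pi(s))$. -/

import Mathlib

open Finset

/-- Value-difference decomposition in a loop-free layered MDP: if rewards differ by
at most `c(s,a)` and transitions by at most `d(s,a)` in ℓ¹, then the difference of
the occupation-measure-weighted values satisfies the two stated inequalities. -/
theorem stmt5 {S A : Type} [Fintype S] [Fintype A]
    (L : ℕ) (lay : S → ℕ) (π : S → A)
    (P Phat : S → A → S → ℝ)
    (hPnn : ∀ s a s', 0 ≤ P s a s')
    (hPsupp : ∀ s a s', P s a s' ≠ 0 → lay s' = lay s + 1)
    (hPsum : ∀ s a, lay s < L →
      ∑ s' ∈ Finset.univ.filter (fun s' => lay s' = lay s + 1), P s a s' = 1)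
    (hQnn : ∀ s a s', 0 ≤ Phat s a s')
    (hQsupp : ∀ s a s', Phat s a s' ≠ 0 → lay s' = lay s + 1)
    (hQsum : ∀ s a, lay s < L →
      ∑ s' ∈ Finset.univ.filter (fun s' => lay s' = lay s + 1), Phat s a s' = 1)
    (s0 : S) (hs0 : lay s0 = 0) (hs0uniq : ∀ s, lay s = 0 → s = s0)
    (μ μhat : S → ℝ)
    (hμ0 : μ s0 = 1) (hμhat0 : μhat s0 = 1)
    (hμrec : ∀ s', 1 ≤ lay s' → lay s' ≤ L →
      μ s' = ∑ s ∈ Finset.univ.filter (fun s => lay s + 1 = lay s'), μ s * P s (π s) s')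
    (hμhatrec : ∀ s', 1 ≤ lay s' → lay s' ≤ L →
      μhat s' = ∑ s ∈ Finset.univ.filter (fun s => lay s + 1 = lay s'),
        μhat s * Phat s (π s) s')
    -- reward functions with values in [0,1] and their error bounds:
    (r rhat : S → A → ℝ)
    (hr : ∀ s a, r s a ∈ Set.Icc (0 : ℝ) 1) (hrhat : ∀ s a, rhat s a ∈ Set.Icc (0 : ℝ) 1)
    (c : S → A → ℝ) (hc0 : ∀ s a, 0 ≤ c s a)
    (hc : ∀ s a, |rhat s a - r s a| ≤ c s a)
    (d : S → A → ℝ) (hd0 : ∀ s a, 0 ≤ d s a)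
    (hd : ∀ s a, lay s < L →
      ∑ s' ∈ Finset.univ.filter (fun s' => lay s' = lay s + 1),
        |Phat s a s' - P s a s'| ≤ d s a)
    -- the two values:
    (v vhat : ℝ)
    (hv : v = ∑ l ∈ Finset.range L,
      ∑ s ∈ Finset.univ.filter (fun s => lay s = l), μ s * r s (π s))
    (hvhat : vhat = ∑ l ∈ Finset.range L,
      ∑ s ∈ Finset.univ.filter (fun s => lay s = l), μhat s * rhat s (π s)) :
    (vhat - v ≤
        (∑ l ∈ Finset.range L,
          ∑ s ∈ Finset.univ.filter (fun s => lay s = l), |μhat s - μ s|) +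
        ∑ l ∈ Finset.range L,
          ∑ s ∈ Finset.univ.filter (fun s => lay s = l),
            μ s * (rhat s (π s) - r s (π s))) ∧
      vhat - v ≤
        (L : ℝ) * (∑ k ∈ Finset.range L,
          ∑ s ∈ Finset.univ.filter (fun s => lay s = k), μ s * d s (π s)) +
        ∑ l ∈ Finset.range L,
          ∑ s ∈ Finset.univ.filter (fun s => lay s = l), μ s * c s (π s) := by

  -- nonnegativity of μ on layers ≤ L
  have hμnn : ∀ n, n ≤ L → ∀ s, lay s = n → 0 ≤ μ s := by
    intro n
    induction n with
    | zero => intro _ s hsl; rw [hs0uniq s hsl, hμ0]; norm_num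
    | succ m ih =>
      intro hle s' hs'
      rw [hμrec s' (by omega) (by omega)]
      apply Finset.sum_nonneg
      intro s hs
      simp only [Finset.mem_filter] at hs
      exact mul_nonneg (ih (by omega) s (by omega)) (hPnn _ _ _)
  -- layer-wise bound on occupation measure difference
  have key : ∀ l, l ≤ L →
      ∑ s ∈ Finset.univ.filter (fun s => lay s = l), |μhat s - μ s| ≤
      ∑ k ∈ Finset.range l,
        ∑ s ∈ Finset.univ.filter (fun s => lay s = k), μ s * d s (π s) := by
    intro l
    induction l with
    | zero =>
      intro _
      simp only [Finset.range_zero, Finset.sum_empty]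
      apply le_of_eq
      apply Finset.sum_eq_zero
      intro s hs
      simp only [Finset.mem_filter] at hs
      rw [hs0uniq s hs.2, hμhat0, hμ0]
      simp
    | succ m ih =>
      intro hle
      have hstep : ∑ s' ∈ Finset.univ.filter (fun s' => lay s' = m + 1), |μhat s' - μ s'| ≤
          (∑ s ∈ Finset.univ.filter (fun s => lay s = m), |μhat s - μ s|) +
          ∑ s ∈ Finset.univ.filter (fun s => lay s = m), μ s * d s (π s) := by
        have h1 : ∀ s' ∈ Finset.univ.filter (fun s' => lay s' = m + 1),
            |μhat s' - μ s'| ≤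
            ∑ s ∈ Finset.univ.filter (fun s => lay s = m),
              (|μhat s - μ s| * Phat s (π s) s' + μ s * |Phat s (π s) s' - P s (π s) s'|) := by
          intro s' hs'
          simp only [Finset.mem_filter] at hs'
          rw [hμhatrec s' (by omega) (by omega), hμrec s' (by omega) (by omega)]
          have hfeq : Finset.univ.filter (fun s => lay s + 1 = lay s') =
              Finset.univ.filter (fun s : S => lay s = m) := by
            apply Finset.filter_congr; intro s _; simp [hs'.2]
          rw [hfeq, ← Finset.sum_sub_distrib]
          refine (Finset.abs_sum_le_sum_abs _ _).trans ?_
          apply Finset.sum_le_sum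
          intro s hs
          simp only [Finset.mem_filter] at hs
          have hμs : 0 ≤ μ s := hμnn m (by omega) s hs.2
          calc |μhat s * Phat s (π s) s' - μ s * P s (π s) s'|
              = |(μhat s - μ s) * Phat s (π s) s' + μ s * (Phat s (π s) s' - P s (π s) s')| := by
                ring_nf
            _ ≤ |(μhat s - μ s) * Phat s (π s) s'| + |μ s * (Phat s (π s) s' - P s (π s) s')| :=
                abs_add_le _ _
            _ = |μhat s - μ s| * Phat s (π s) s' + μ s * |Phat s (π s) s' - P s (π s) s'| := by
                rw [abs_mul, abs_mul, abs_of_nonneg (hQnn _ _ _), abs_of_nonneg hμs]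
        calc ∑ s' ∈ Finset.univ.filter (fun s' => lay s' = m + 1), |μhat s' - μ s'|
            ≤ ∑ s' ∈ Finset.univ.filter (fun s' => lay s' = m + 1),
              ∑ s ∈ Finset.univ.filter (fun s => lay s = m),
                (|μhat s - μ s| * Phat s (π s) s' + μ s * |Phat s (π s) s' - P s (π s) s'|) :=
              Finset.sum_le_sum h1
          _ = ∑ s ∈ Finset.univ.filter (fun s => lay s = m),
              ∑ s' ∈ Finset.univ.filter (fun s' => lay s' = m + 1),
                (|μhat s - μ s| * Phat s (π s) s' + μ s * |Phat s (π s) s' - P s (π s) s'|) :=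
              Finset.sum_comm
          _ = ∑ s ∈ Finset.univ.filter (fun s => lay s = m),
              (|μhat s - μ s| * (∑ s' ∈ Finset.univ.filter (fun s' => lay s' = m + 1),
                  Phat s (π s) s') +
               μ s * ∑ s' ∈ Finset.univ.filter (fun s' => lay s' = m + 1),
                  |Phat s (π s) s' - P s (π s) s'|) := by
              apply Finset.sum_congr rfl
              intro s hs
              rw [Finset.sum_add_distrib, Finset.mul_sum, Finset.mul_sum]
          _ ≤ (∑ s ∈ Finset.univ.filter (fun s => lay s = m), |μhat s - μ s|) +
              ∑ s ∈ Finset.univ.filter (fun s => lay s = m), μ s * d s (π s) := by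
              rw [← Finset.sum_add_distrib]
              apply Finset.sum_le_sum
              intro s hs
              simp only [Finset.mem_filter] at hs
              have hlay : lay s < L := by omega
              have hμs : 0 ≤ μ s := hμnn m (by omega) s hs.2
              have e1 : ∑ s' ∈ Finset.univ.filter (fun s' => lay s' = m + 1),
                  Phat s (π s) s' = 1 := by
                rw [← hQsum s (π s) hlay]
                apply Finset.sum_congr _ (fun _ _ => rfl)
                apply Finset.filter_congr; intro s' _; simp [hs.2]
              have e2 : ∑ s' ∈ Finset.univ.filter (fun s' => lay s' = m + 1),
                  |Phat s (π s) s' - P s (π s) s'| ≤ d s (π s) := by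
                refine le_trans (le_of_eq ?_) (hd s (π s) hlay)
                apply Finset.sum_congr _ (fun _ _ => rfl)
                apply Finset.filter_congr; intro s' _; simp [hs.2]
              rw [e1, mul_one]
              exact add_le_add le_rfl (mul_le_mul_of_nonneg_left e2 hμs)
      rw [Finset.sum_range_succ]
      exact hstep.trans (add_le_add (ih (by omega)) le_rfl)
  -- first inequality
  have habs : vhat - v ≤
      (∑ l ∈ Finset.range L,
        ∑ s ∈ Finset.univ.filter (fun s => lay s = l), |μhat s - μ s|) +
      ∑ l ∈ Finset.range L,
        ∑ s ∈ Finset.univ.filter (fun s => lay s = l),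
          μ s * (rhat s (π s) - r s (π s)) := by
    rw [hv, hvhat, ← Finset.sum_sub_distrib, ← Finset.sum_add_distrib]
    apply Finset.sum_le_sum
    intro l hl
    rw [← Finset.sum_sub_distrib, ← Finset.sum_add_distrib]
    apply Finset.sum_le_sum
    intro s hs
    have h1 : μhat s * rhat s (π s) - μ s * r s (π s) =
        (μhat s - μ s) * rhat s (π s) + μ s * (rhat s (π s) - r s (π s)) := by ring
    rw [h1]
    refine add_le_add ?_ le_rfl
    calc (μhat s - μ s) * rhat s (π s) ≤ |(μhat s - μ s) * rhat s (π s)| := le_abs_self _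
      _ = |μhat s - μ s| * |rhat s (π s)| := abs_mul _ _
      _ ≤ |μhat s - μ s| * 1 := by
          apply mul_le_mul_of_nonneg_left _ (abs_nonneg _)
          rw [abs_of_nonneg (hrhat s (π s)).1]
          exact (hrhat s (π s)).2
      _ = |μhat s - μ s| := mul_one _
  refine ⟨habs, habs.trans (add_le_add ?_ ?_)⟩
  · -- ∑ layers of |Δ| ≤ L * ∑ μ d
    have hTnn : ∀ k, k ≤ L → 0 ≤ ∑ s ∈ Finset.univ.filter (fun s => lay s = k),
        μ s * d s (π s) := by
      intro k hk
      apply Finset.sum_nonneg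
      intro s hs
      simp only [Finset.mem_filter] at hs
      exact mul_nonneg (hμnn k hk s hs.2) (hd0 _ _)
    calc ∑ l ∈ Finset.range L,
          ∑ s ∈ Finset.univ.filter (fun s => lay s = l), |μhat s - μ s|
        ≤ ∑ l ∈ Finset.range L, ∑ k ∈ Finset.range l,
            ∑ s ∈ Finset.univ.filter (fun s => lay s = k), μ s * d s (π s) := by
          apply Finset.sum_le_sum
          intro l hl
          exact key l (le_of_lt (Finset.mem_range.mp hl))
      _ ≤ ∑ l ∈ Finset.range L, ∑ k ∈ Finset.range L,
            ∑ s ∈ Finset.univ.filter (fun s => lay s = k), μ s * d s (π s) := by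
          apply Finset.sum_le_sum
          intro l hl
          apply Finset.sum_le_sum_of_subset_of_nonneg
          · exact Finset.range_subset_range.mpr (le_of_lt (Finset.mem_range.mp hl))
          · intro k hk _
            exact hTnn k (le_of_lt (Finset.mem_range.mp hk))
      _ = (L : ℝ) * ∑ k ∈ Finset.range L,
            ∑ s ∈ Finset.univ.filter (fun s => lay s = k), μ s * d s (π s) := by
          rw [Finset.sum_const, Finset.card_range, nsmul_eq_mul]
  · apply Finset.sum_le_sum
    intro l hl
    apply Finset.sum_le_sum
    intro s hs
    simp only [Finset.mem_filter] at hs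
    have hμs : 0 ≤ μ s := hμnn l (le_of_lt (Finset.mem_range.mp hl)) s hs.2
    apply mul_le_mul_of_nonneg_left _ hμs
    exact (le_abs_self _).trans (hc s (π s))
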